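/- A partition λ is self-conjugate (λ = λ^tr) if and only if its binary word ψ(λ) = (c_k)_{k∈ℤ} satisfies c_{−k−1} = 1 − c_k for all integers k ≥ 0. -/
import Mathlib


open scoped Classical

/-- `p k` is the `(k+1)`-st part `λ_{k+1}` of the partition `λ` :
partitions are encoded by their (eventually zero, antitone) sequence of parts. -/
def IsPartition (p : ℕ → ℕ) : Prop :=
  Antitone p ∧ ∃ N, ∀ i, N ≤ i → p i = 0

/-- The number of (nonzero) parts of a partition. -/
noncomputable def plen (p : ℕ → ℕ) : ℕ := Nat.card {i : ℕ // p i ≠ 0}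

/-- The number of boxes `|λ|` of a partition. -/
noncomputable def psize (p : ℕ → ℕ) : ℕ := ∑ i ∈ Finset.range (plen p), p i

/-- The conjugate partition : `pconj p j = λ^tr_{j+1}`. -/
noncomputable def pconj (p : ℕ → ℕ) (j : ℕ) : ℕ := Nat.card {i : ℕ // j + 1 ≤ p i}

/-- The size of the Durfee square of a partition. -/
noncomputable def durfee (p : ℕ → ℕ) : ℕ := Nat.card {i : ℕ // i + 1 ≤ p i}

/-- The cells (boxes) of the Young diagram, `0`-indexed : `(i, j)` is the box in
row `i+1` and column `j+1`. -/
noncomputable def cells (p : ℕ → ℕ) : Finset (ℕ × ℕ) :=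
  (Finset.range (plen p) ×ˢ Finset.range (p 0)).filter fun s => s.2 < p s.1

/-- The hook length of the (0-indexed) box `(i, j)` :
`h = λ_{i+1} - (j+1) + λ^tr_{j+1} - (i+1) + 1`. -/
noncomputable def hookLen (p : ℕ → ℕ) (i j : ℕ) : ℕ :=
  (p i - j) + (pconj p j - i) - 1

/-- The multiset of hook lengths `ℋ(λ)`. -/
noncomputable def hooks (p : ℕ → ℕ) : Multiset ℕ :=
  (cells p).val.map fun s => hookLen p s.1 s.2

/-- The multiset of hook lengths of the boxes strictly above the main diagonal. -/
noncomputable def hooksAbove (p : ℕ → ℕ) : Multiset ℕ :=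
  ((cells p).filter fun s => s.1 < s.2).val.map fun s => hookLen p s.1 s.2

/-- The multiset of hook lengths of the boxes strictly below the main diagonal. -/
noncomputable def hooksBelow (p : ℕ → ℕ) : Multiset ℕ :=
  ((cells p).filter fun s => s.2 < s.1).val.map fun s => hookLen p s.1 s.2

/-- `p` is an `n`-core : no hook length is equal to `n`. -/
def IsCore (n : ℕ) (p : ℕ → ℕ) : Prop := n ∉ hooks p

/-- Self-conjugate partitions. -/
def SelfConj (p : ℕ → ℕ) : Prop := p = pconj p

/-- Distinct partitions (strictly decreasing nonzero parts). -/
def IsDistinct (p : ℕ → ℕ) : Prop := ∀ i, p (i + 1) ≠ 0 → p (i + 1) < p i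

/-- Doubled distinct partitions : `λ_i = λ^tr_i + 1` for `i` at most
the size of the Durfee square. -/
def IsDD (p : ℕ → ℕ) : Prop := ∀ i < durfee p, p i = pconj p i + 1

/-- Conjugates of doubled distinct partitions. -/
def IsDDtr (p : ℕ → ℕ) : Prop := ∃ q, IsPartition q ∧ IsDD q ∧ p = pconj q

/-- The doubled distinct partition `λ̄λ̄` of a distinct partition `λ̄` :
add `λ̄_i` boxes to the `i`-th column of the shifted Young diagram of `λ̄`. -/
noncomputable def double (b : ℕ → ℕ) : ℕ → ℕ := fun i =>
  if i < plen b then b i + (i + 1)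
  else Nat.card {j : ℕ // j < plen b ∧ i + 1 ≤ b j + j}

/-- The self-conjugate partition associated with a distinct partition `λ̄` :
add `λ̄_i - 1` boxes to the `i`-th column of the shifted Young diagram of `λ̄`. -/
noncomputable def scOf (b : ℕ → ℕ) : ℕ → ℕ := fun i =>
  if i < plen b then b i + i
  else Nat.card {j : ℕ // j < plen b ∧ i + 1 ≤ b j + j}

/-- The binary word `ψ(λ) = (c_k)_{k ∈ ℤ}` of a partition :
`c_k = 0` iff `k ∈ {λ_i - i : i ≥ 1}` and `c_k = 1` otherwise
(i.e. iff `k ∈ {j - λ^tr_j - 1 : j ≥ 1}`). -/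
noncomputable def word (p : ℕ → ℕ) (k : ℤ) : ℕ :=
  if ∃ m : ℕ, k = (p m : ℤ) - ((m : ℤ) + 1) then 0 else 1

/-- The `g`-charge of a `g`-core : `m_i = min {k ∈ ℤ : c_{kg+i} = 1}`. -/
noncomputable def ncharge (g : ℕ) (p : ℕ → ℕ) (i : ℕ) : ℤ :=
  sInf {k : ℤ | word p (k * (g : ℤ) + (i : ℤ)) = 1}

/-- The subword of residue `k` modulo `g` of the word of `p`. -/
noncomputable def subword (g k : ℕ) (p : ℕ → ℕ) (i : ℤ) : ℕ :=
  word p ((g : ℤ) * i + (k : ℤ))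

/-- The shift turning the subword of residue `k` into a balanced partition word. -/
noncomputable def qcharge (g : ℕ) (p : ℕ → ℕ) (k : ℕ) : ℤ :=
  (Nat.card {i : ℕ // subword g k p (i : ℤ) = 0} : ℤ) -
    (Nat.card {i : ℕ // subword g k p (-((i : ℤ) + 1)) = 1} : ℤ)

/-- `ν` is the `k`-th component of the `g`-quotient of `p` : its word is the
subword of residue `k` of the word of `p`, reindexed so as to be balanced. -/
def IsQuotientAt (g : ℕ) (p : ℕ → ℕ) (k : ℕ) (ν : ℕ → ℕ) : Prop :=
  ∀ i : ℤ, word ν i = subword g k p (i + qcharge g p k)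

/-- `ω` is the `g`-core of `p` : every subword of its word is sorted
(all `0`'s, then all `1`'s), with transition index the charge of `p`. -/
def IsCoreOf (g : ℕ) (p ω : ℕ → ℕ) : Prop :=
  ∀ k < g, ∀ i : ℤ, (subword g k ω i = 1 ↔ qcharge g p k ≤ i)

/-- `(ω, ν)` is the Littlewood decomposition of `p` for the modulus `g`. -/
def IsLittlewood (g : ℕ) (p ω : ℕ → ℕ) (ν : ℕ → ℕ → ℕ) : Prop :=
  IsCoreOf g p ω ∧ ∀ k < g, IsQuotientAt g p k (ν k)

/-- The number `a_r` of boxes of residue `r` modulo `g`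
(the residue of the box `(i, j)` -- `0`-indexed -- being `(j - i) mod g`). -/
noncomputable def resCount (g : ℕ) (p : ℕ → ℕ) (r : ℕ) : ℕ :=
  ((cells p).filter fun s => ((s.2 : ℤ) - (s.1 : ℤ)) % (g : ℤ) = (r : ℤ)).card

/-- The rectangular partition with `r` rows of length `c`. -/
def rect (r c : ℕ) : ℕ → ℕ := fun i => if i < r then c else 0

/-- The statistic `m = max({1} ∪ {(g + λ̄_i)/g : λ̄_i ≡ 0 (mod g)})`. -/
noncomputable def mStat (g : ℕ) (b : ℕ → ℕ) : ℕ :=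
  sSup ({1} ∪ {k : ℕ | ∃ i < plen b, g ∣ b i ∧ k = (g + b i) / g})

/-- The statistic `m' = max({0} ∪ {λ̄_i/g : λ̄_i ≡ g/2 (mod g)})`. -/
noncomputable def mStat' (g : ℕ) (b : ℕ → ℕ) : ℕ :=
  sSup ({0} ∪ {k : ℕ | ∃ i < plen b, 2 * (b i % g) = g ∧ k = b i / g})

section AuxSelfConj

variable {p : ℕ → ℕ}

private lemma mem_iff_lt_ncard' {S : Set ℕ} (hfin : S.Finite)
    (hdc : ∀ a b : ℕ, a ≤ b → b ∈ S → a ∈ S) (i : ℕ) : i ∈ S ↔ i < S.ncard := by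
  constructor
  · intro hi
    have hsub : Set.Iic i ⊆ S := fun a ha => hdc a i ha hi
    have h1 := Set.ncard_le_ncard hsub hfin
    have h2 : (Set.Iic i).ncard = i + 1 := by
      rw [← Finset.coe_Iic, Set.ncard_coe_finset, Nat.card_Iic]
    omega
  · intro hi
    by_contra hni
    have hsub : S ⊆ Set.Iio i := by
      intro a ha
      simp only [Set.mem_Iio]
      by_contra hai
      exact hni (hdc i a (by omega) ha)
    have h1 := Set.ncard_le_ncard hsub (Set.finite_Iio i)
    have h2 : (Set.Iio i).ncard = i := by
      rw [← Finset.coe_range, Set.ncard_coe_finset, Finset.card_range]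
    omega

private lemma pconj_eq_ncard (p : ℕ → ℕ) (j : ℕ) :
    pconj p j = Set.ncard {i : ℕ | j + 1 ≤ p i} := by
  rw [pconj, ← Nat.card_coe_set_eq]
  rfl

private lemma lt_pconj_iff (hp : IsPartition p) (i j : ℕ) :
    i < pconj p j ↔ j + 1 ≤ p i := by
  obtain ⟨hant, N, hN⟩ := hp
  have hfin : {i : ℕ | j + 1 ≤ p i}.Finite := by
    apply (Set.finite_Iio N).subset
    intro a ha
    simp only [Set.mem_setOf_eq] at ha
    by_contra h
    simp only [Set.mem_Iio, not_lt] at h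
    have := hN a h
    omega
  rw [pconj_eq_ncard]
  exact (mem_iff_lt_ncard' hfin (fun a b hab hb => le_trans hb (hant hab)) i).symm

private lemma pconj_anti (hp : IsPartition p) : Antitone (pconj p) := by
  intro j j' hjj'
  by_contra h
  push_neg at h
  have h1 : pconj p j < pconj p j' := h
  have h2 : j' + 1 ≤ p (pconj p j) := (lt_pconj_iff hp _ _).mp h1
  have h3 : pconj p j < pconj p j := (lt_pconj_iff hp _ _).mpr (by omega)
  omega

private lemma pconj_partition (hp : IsPartition p) : IsPartition (pconj p) := by
  refine ⟨pconj_anti hp, p 0, fun j hj => ?_⟩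
  by_contra h
  have h1 : 0 < pconj p j := Nat.pos_of_ne_zero h
  have h2 : j + 1 ≤ p 0 := (lt_pconj_iff hp _ _).mp h1
  omega

/-- Cover: every integer is of one of the two forms. -/
private lemma word_cover (hp : IsPartition p) (x : ℤ)
    (h : ¬ ∃ m : ℕ, x = (p m : ℤ) - ((m : ℤ) + 1)) :
    ∃ j : ℕ, x = (j : ℤ) - (pconj p j : ℤ) := by
  push_neg at h
  by_cases hx : x < -(pconj p 0 : ℤ)
  · exfalso
    set m := (-x - 1).toNat with hmdef
    have hm : (m : ℤ) = -x - 1 := Int.toNat_of_nonneg (by omega)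
    have hge : pconj p 0 ≤ m := by omega
    have hpm : p m = 0 := by
      by_contra h0
      have h1 : m < pconj p 0 := (lt_pconj_iff hp m 0).mpr (by omega)
      omega
    exact h m (by rw [hpm]; push_cast; omega)
  · push_neg at hx
    set P : ℕ → Prop := fun j => (j : ℤ) - (pconj p j : ℤ) ≤ x with hP
    have hbound : ∀ j, P j → (j : ℤ) ≤ x + pconj p 0 := by
      intro j hj
      have := pconj_anti hp (Nat.zero_le j)
      simp only [hP] at hj
      omega
    set B := (x + (pconj p 0 : ℤ)).toNat with hB
    have hP0 : P 0 := by simp only [hP]; push_cast; omega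
    have h0B : 0 ≤ B := Nat.zero_le B
    set J := Nat.findGreatest P B with hJ
    have hPJ : P J := Nat.findGreatest_spec h0B hP0
    have hPJ1 : ¬ P (J + 1) := by
      by_cases hle : J + 1 ≤ B
      · exact Nat.findGreatest_is_greatest (Nat.lt_succ_self J) hle
      · intro hPj1
        have := hbound (J + 1) hPj1
        have hJB : J ≤ B := Nat.findGreatest_le B
        omega
    simp only [hP, not_le] at hPJ hPJ1
    by_cases heq : x = (J : ℤ) - (pconj p J : ℤ)
    · exact ⟨J, heq⟩
    · exfalso
      have hxJ : x ≤ (J : ℤ) := by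
        have : (pconj p (J + 1) : ℤ) ≥ 0 := by positivity
        omega
      set m := ((J : ℤ) - x).toNat with hmdef
      have hm : (m : ℤ) = (J : ℤ) - x := Int.toNat_of_nonneg (by omega)
      have hm1 : m < pconj p J := by omega
      have hm2 : pconj p (J + 1) ≤ m := by omega
      have hp1 : J + 1 ≤ p m := (lt_pconj_iff hp m J).mp hm1
      have hp2 : ¬ (J + 2 ≤ p m) := fun hc =>
        (by omega : ¬ m < pconj p (J + 1)) ((lt_pconj_iff hp m (J + 1)).mpr hc)
      have hpm : p m = J + 1 := by omega
      exact h m (by rw [hpm]; push_cast; omega)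

/-- Disjointness + cover: the key dichotomy. -/
private lemma word_dichotomy (hp : IsPartition p) (x : ℤ) :
    (∃ m : ℕ, x = (p m : ℤ) - ((m : ℤ) + 1)) ↔
      ¬ ∃ j : ℕ, x = (j : ℤ) - (pconj p j : ℤ) := by
  constructor
  · rintro ⟨m, hm⟩ ⟨j, hj⟩
    by_cases hc : j + 1 ≤ p m
    · have h1 : m < pconj p j := (lt_pconj_iff hp m j).mpr hc
      have h1' : (m : ℤ) + 1 ≤ (pconj p j : ℤ) := by exact_mod_cast h1
      have h2' : (j : ℤ) + 1 ≤ (p m : ℤ) := by exact_mod_cast hc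
      omega
    · have h1 : ¬ m < pconj p j := fun hc' => hc ((lt_pconj_iff hp m j).mp hc')
      have h1' : (pconj p j : ℤ) ≤ (m : ℤ) := by
        have : pconj p j ≤ m := by omega
        exact_mod_cast this
      have h2' : (p m : ℤ) ≤ (j : ℤ) := by
        have : p m ≤ j := by omega
        exact_mod_cast this
      omega
  · intro hnj
    by_contra hnm
    exact hnj (word_cover hp x hnm)

private lemma word_eq_zero_iff (p : ℕ → ℕ) (x : ℤ) :
    word p x = 0 ↔ ∃ m : ℕ, x = (p m : ℤ) - ((m : ℤ) + 1) := by
  unfold word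
  split <;> simp_all

private lemma word_eq_one_iff (p : ℕ → ℕ) (x : ℤ) :
    word p x = 1 ↔ ¬ ∃ m : ℕ, x = (p m : ℤ) - ((m : ℤ) + 1) := by
  unfold word
  split <;> simp_all

private lemma word_le_one (p : ℕ → ℕ) (x : ℤ) : word p x ≤ 1 := by
  unfold word
  split <;> omega

/-- Strict decrease of `m ↦ p m - (m+1)`. -/
private lemma strict_dec (hp : IsPartition p) {m n : ℕ} (h : m ≤ n) :
    (p n : ℤ) - ((n : ℤ) + 1) ≤ (p m : ℤ) - ((m : ℤ) + 1) := by
  have h1 : p n ≤ p m := hp.1 h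
  have h2 : (p n : ℤ) ≤ (p m : ℤ) := by exact_mod_cast h1
  have h3 : (m : ℤ) ≤ (n : ℤ) := by exact_mod_cast h
  omega

private lemma word_injective {p q : ℕ → ℕ} (hp : IsPartition p) (hq : IsPartition q)
    (h : ∀ x : ℤ, (∃ m : ℕ, x = (p m : ℤ) - ((m : ℤ) + 1)) ↔
      (∃ m : ℕ, x = (q m : ℤ) - ((m : ℤ) + 1))) : p = q := by
  have key : ∀ n : ℕ, p n = q n := by
    intro n
    induction n using Nat.strong_induction_on with
    | _ n ih =>
      have hle : (p n : ℤ) - ((n : ℤ) + 1) ≤ (q n : ℤ) - ((n : ℤ) + 1) := by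
        obtain ⟨m, hm⟩ := (h _).mp ⟨n, rfl⟩
        rcases lt_or_ge m n with hmn | hmn
        · exfalso
          have h1 : q m = p m := (ih m hmn).symm
          rw [h1] at hm
          have h2 := strict_dec hp (by omega : m + 1 ≤ n)
          have h3 : ((m : ℤ) + 1 : ℤ) = ((m + 1 : ℕ) : ℤ) := by push_cast; ring
          have h4 : (p (m+1) : ℤ) ≤ (p m : ℤ) := by exact_mod_cast hp.1 (Nat.le_succ m)
          have h5 : (m : ℤ) < (n : ℤ) := by exact_mod_cast hmn
          omega
        · have := strict_dec hq hmn
          omega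
      have hge : (q n : ℤ) - ((n : ℤ) + 1) ≤ (p n : ℤ) - ((n : ℤ) + 1) := by
        obtain ⟨m, hm⟩ := (h _).mpr ⟨n, rfl⟩
        rcases lt_or_ge m n with hmn | hmn
        · exfalso
          have h1 : p m = q m := ih m hmn
          rw [h1] at hm
          have h2 := strict_dec hq (by omega : m + 1 ≤ n)
          have h4 : (q (m+1) : ℤ) ≤ (q m : ℤ) := by exact_mod_cast hq.1 (Nat.le_succ m)
          have h5 : (m : ℤ) < (n : ℤ) := by exact_mod_cast hmn
          omega
        · have := strict_dec hp hmn
          omega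
      omega
  funext n
  exact key n

end AuxSelfConj

/-- A partition `λ` is self-conjugate if and only if its binary word
`ψ(λ) = (c_k)` satisfies `c_{-k-1} = 1 - c_k` for all integers `k ≥ 0`. -/
theorem self_conjugate_iff_word (p : ℕ → ℕ) (hp : IsPartition p) :
    SelfConj p ↔ ∀ k : ℕ, word p (-(k : ℤ) - 1) = 1 - word p (k : ℤ) := by
  constructor
  · intro hsc k
    rcases Nat.lt_or_ge (word p (k : ℤ)) 1 with h0 | h1
    · -- word p k = 0
      have h0' : word p (k : ℤ) = 0 := by omega
      obtain ⟨m, hm⟩ := (word_eq_zero_iff p (k : ℤ)).mp h0'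
      have hj : ∃ j : ℕ, (-(k : ℤ) - 1) = (j : ℤ) - (pconj p j : ℤ) := by
        refine ⟨m, ?_⟩
        rw [← hsc]
        omega
      have : ¬ ∃ m : ℕ, (-(k : ℤ) - 1) = (p m : ℤ) - ((m : ℤ) + 1) := by
        intro hc
        exact (word_dichotomy hp _).mp hc hj
      rw [(word_eq_one_iff p _).mpr this, h0']
    · -- word p k = 1
      have h1' : word p (k : ℤ) = 1 := le_antisymm (word_le_one p _) h1
      have hno : ¬ ∃ m : ℕ, (k : ℤ) = (p m : ℤ) - ((m : ℤ) + 1) :=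
        (word_eq_one_iff p _).mp h1'
      obtain ⟨j, hj⟩ : ∃ j : ℕ, (k : ℤ) = (j : ℤ) - (pconj p j : ℤ) := by
        by_contra hc
        exact hno ((word_dichotomy hp _).mpr hc)
      have : ∃ m : ℕ, (-(k : ℤ) - 1) = (p m : ℤ) - ((m : ℤ) + 1) := by
        refine ⟨j, ?_⟩
        rw [hsc]
        omega
      rw [(word_eq_zero_iff p _).mpr this, h1']
  · intro h
    have hflip : ∀ x : ℤ, word p x = 1 - word p (-x - 1) := by
      intro x
      rcases le_or_gt 0 x with hx | hx
      · have hk : ((x.toNat : ℕ) : ℤ) = x := Int.toNat_of_nonneg hx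
        have := h x.toNat
        rw [hk] at this
        have l1 := word_le_one p x
        have l2 := word_le_one p (-x - 1)
        omega
      · set k := (-x - 1).toNat with hk
        have hk' : ((k : ℕ) : ℤ) = -x - 1 := Int.toNat_of_nonneg (by omega)
        have := h k
        rw [hk'] at this
        have hxx : -((-x : ℤ) - 1) - 1 = x := by ring
        rw [show -(-x - 1) - 1 = x by ring] at this
        rw [this]
    have hiff : ∀ x : ℤ, (∃ m : ℕ, x = (p m : ℤ) - ((m : ℤ) + 1)) ↔
        (∃ m : ℕ, x = (pconj p m : ℤ) - ((m : ℤ) + 1)) := by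
      intro x
      have step1 : (∃ m : ℕ, x = (pconj p m : ℤ) - ((m : ℤ) + 1)) ↔
          (∃ m : ℕ, -x - 1 = (m : ℤ) - (pconj p m : ℤ)) := by
        constructor
        · rintro ⟨m, hm⟩; exact ⟨m, by omega⟩
        · rintro ⟨m, hm⟩; exact ⟨m, by omega⟩
      have step2 : (∃ m : ℕ, -x - 1 = (m : ℤ) - (pconj p m : ℤ)) ↔
          ¬ (∃ m : ℕ, -x - 1 = (p m : ℤ) - ((m : ℤ) + 1)) := by
        constructor
        · intro hj hc
          exact (word_dichotomy hp _).mp hc hj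
        · intro hc
          by_contra hj
          exact hc ((word_dichotomy hp _).mpr hj)
      have step3 : ¬ (∃ m : ℕ, -x - 1 = (p m : ℤ) - ((m : ℤ) + 1)) ↔
          word p (-x - 1) = 1 := (word_eq_one_iff p _).symm
      have step4 : word p (-x - 1) = 1 ↔ word p x = 0 := by
        have := hflip x
        have l1 := word_le_one p x
        have l2 := word_le_one p (-x - 1)
        omega
      rw [step1, step2, step3, step4, word_eq_zero_iff]
    exact word_injective hp (pconj_partition hp) hiff
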